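/- The set { 6 ∫₀¹ x(1−x) f(x) dx − 1 : f a generator } equals the open interval (−1, 1/2). Consequently, for a fixed signature s ∈ {0,1}², the range of Spearman's rho over the copulas with densities c_f^s, f a generator, is (−1, 1/2) when s₁ = s₂ and (−1/2, 1) when s₁ ≠ s₂. -/

import Mathlib

open MeasureTheory

/-- A generator: a probability density on `[0,1]`. -/
def IsGenerator (f : ℝ → ℝ) : Prop :=
  Measurable f ∧ (∀ x ∈ Set.Icc (0:ℝ) 1, 0 ≤ f x) ∧ ∫ x in Set.Icc (0:ℝ) 1, f x = 1
open intervalIntegral in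
lemma intervalIntegral_integral_id (a b : ℝ) : ∫ x in a..b, x = (b^2-a^2)/2 := integral_id
open intervalIntegral in
lemma intervalIntegral_integral_pow (a b : ℝ) (n : ℕ) : ∫ x in a..b, x^n = (b^(n+1)-a^(n+1))/(n+1) := integral_pow n

lemma unif_integral {a b : ℝ} (hab : a < b) (hsub : Set.Icc a b ⊆ Set.Icc (0:ℝ) 1)
    (g : ℝ → ℝ) :
    ∫ x in Set.Icc (0:ℝ) 1, g x * (if x ∈ Set.Icc a b then (b-a)⁻¹ else 0)
      = (b-a)⁻¹ * ∫ x in Set.Icc a b, g x := by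
  have h1 : ∀ x, g x * (if x ∈ Set.Icc a b then (b-a)⁻¹ else 0)
      = (Set.Icc a b).indicator (fun x => g x * (b-a)⁻¹) x := by
    intro x
    by_cases h : x ∈ Set.Icc a b <;> simp [Set.indicator_apply, h]
  simp_rw [h1]
  rw [setIntegral_indicator measurableSet_Icc, Set.inter_eq_self_of_subset_right hsub,
    integral_mul_const]
  ring

lemma poly_integral {a b : ℝ} (hab : a ≤ b) :
    ∫ x in Set.Icc a b, (x * (1 - x)) = (b^2 - a^2)/2 - (b^3 - a^3)/3 := by
  rw [MeasureTheory.integral_Icc_eq_integral_Ioc, ← intervalIntegral.integral_of_le hab]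
  have : ∀ x : ℝ, x * (1 - x) = x - x^2 := by intro x; ring
  simp_rw [this]
  rw [intervalIntegral.integral_sub (intervalIntegral.intervalIntegrable_id)
    (intervalIntegral.intervalIntegrable_pow 2), intervalIntegral_integral_id,
    intervalIntegral_integral_pow]
  ring

lemma unif_gen {a b : ℝ} (ha : 0 ≤ a) (hab : a < b) (hb : b ≤ 1) :
    IsGenerator (fun x => if x ∈ Set.Icc a b then (b-a)⁻¹ else 0) := by
  have hsub : Set.Icc a b ⊆ Set.Icc (0:ℝ) 1 := Set.Icc_subset_Icc ha hb
  refine ⟨Measurable.ite measurableSet_Icc measurable_const measurable_const, ?_, ?_⟩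
  · intro x _
    by_cases h : x ∈ Set.Icc a b <;>
      simp [h, inv_nonneg.mpr (by linarith : (0:ℝ) ≤ b - a)]
  · have := unif_integral hab hsub (fun _ => 1)
    simp only [one_mul] at this
    rw [this, integral_const, measureReal_def, Measure.restrict_apply_univ, Real.volume_Icc,
      ENNReal.toReal_ofReal (by linarith), smul_eq_mul]
    rw [mul_one, inv_mul_cancel₀ (sub_ne_zero.mpr hab.ne')]

lemma unif_val {a b : ℝ} (hab : a < b) (hsub : Set.Icc a b ⊆ Set.Icc (0:ℝ) 1) :
    ∫ x in Set.Icc (0:ℝ) 1, x * (1 - x) * (if x ∈ Set.Icc a b then (b-a)⁻¹ else 0)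
      = (b-a)⁻¹ * ((b^2 - a^2)/2 - (b^3 - a^3)/3) := by
  rw [unif_integral hab hsub (fun x => x * (1 - x)), poly_integral hab.le]

lemma gen_bounds {f : ℝ → ℝ} (hf : IsGenerator f) :
    (0 < ∫ x in Set.Icc (0:ℝ) 1, x * (1 - x) * f x) ∧
    (∫ x in Set.Icc (0:ℝ) 1, x * (1 - x) * f x) < 1/4 := by
  obtain ⟨hm, hnn, hint⟩ := hf
  set μ := volume.restrict (Set.Icc (0:ℝ) 1) with hμ
  have hfint : Integrable f μ := by
    by_contra h
    rw [integral_undef h] at hint; norm_num at hint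
  have haeIcc : ∀ᵐ x ∂μ, x ∈ Set.Icc (0:ℝ) 1 := ae_restrict_mem measurableSet_Icc
  have hf0 : 0 ≤ᵐ[μ] f := haeIcc.mono fun x hx => hnn x hx
  have hgm : AEStronglyMeasurable (fun x => x * (1 - x) * f x) μ :=
    ((measurable_id.mul (measurable_const.sub measurable_id)).mul hm).aestronglyMeasurable
  have hgint : Integrable (fun x => x * (1 - x) * f x) μ := by
    refine (hfint.const_mul (1/4 : ℝ)).mono hgm ?_
    filter_upwards [haeIcc] with x hx
    have h1 : 0 ≤ x := hx.1
    have h2 : x ≤ 1 := hx.2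
    rw [Real.norm_eq_abs, Real.norm_eq_abs, abs_mul, abs_mul, abs_mul]
    have habs : |x| * |1 - x| ≤ |1/4| := by
      rw [abs_of_nonneg h1, abs_of_nonneg (by linarith : (0:ℝ) ≤ 1 - x),
        abs_of_nonneg (by norm_num : (0:ℝ) ≤ 1/4)]
      nlinarith [sq_nonneg (x - 1/2)]
    exact mul_le_mul_of_nonneg_right habs (abs_nonneg _)
  have hsing : ∀ c : ℝ, ∀ᵐ x ∂μ, x ≠ c := by
    intro c
    refine ae_iff.mpr ?_
    have hs : {x : ℝ | ¬ x ≠ c} = {c} := by ext x; simp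
    rw [hs, hμ, Measure.restrict_apply (measurableSet_singleton c)]
    exact measure_mono_null Set.inter_subset_left (Real.volume_singleton)
  have hfz : ∀ (S : Set ℝ), μ S = 0 → (∀ᵐ x ∂μ, x ∉ S → f x = 0) → False := by
    intro S hS h
    have hfeq : f =ᵐ[μ] 0 := by
      have hSc : ∀ᵐ x ∂μ, x ∉ S := by
        rw [ae_iff]; simpa using hS
      filter_upwards [h, hSc] with x hx hxS
      exact hx hxS
    rw [integral_congr_ae hfeq] at hint
    simp at hint
  have hg0 : 0 ≤ᵐ[μ] fun x => x * (1 - x) * f x := by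
    filter_upwards [haeIcc] with x hx
    exact mul_nonneg (mul_nonneg hx.1 (by linarith [hx.2])) (hnn x hx)
  constructor
  · rcases lt_or_eq_of_le (integral_nonneg_of_ae hg0) with h | h
    · exact h
    exfalso
    have hzero := (integral_eq_zero_iff_of_nonneg_ae hg0 hgint).mp h.symm
    refine hfz ({0, 1} : Set ℝ) ?_ ?_
    · rw [hμ, Measure.restrict_apply ((measurableSet_singleton (1:ℝ)).insert 0)]
      exact measure_mono_null Set.inter_subset_left
        (((Set.finite_singleton (1:ℝ)).insert 0).measure_zero volume)
    · filter_upwards [hzero, haeIcc] with x hx hxIcc hxS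
      simp only [Set.mem_insert_iff, Set.mem_singleton_iff, not_or] at hxS
      have hx0 : 0 < x := lt_of_le_of_ne hxIcc.1 (Ne.symm hxS.1)
      have hx1 : x < 1 := lt_of_le_of_ne hxIcc.2 hxS.2
      have : x * (1 - x) * f x = 0 := hx
      rcases mul_eq_zero.mp this with h' | h'
      · exfalso; rcases mul_eq_zero.mp h' with h'' | h'' <;> nlinarith
      · exact h'
  · have hg2eq : (fun x => (x - 1/2)^2 * f x) = fun x => 1/4 * f x - x * (1 - x) * f x := by
      funext x; ring
    have hg2int : Integrable (fun x => (x - 1/2)^2 * f x) μ := by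
      rw [hg2eq]; exact (hfint.const_mul _).sub hgint
    have hg2nn : 0 ≤ᵐ[μ] fun x => (x - 1/2)^2 * f x := by
      filter_upwards [hf0] with x hx
      exact mul_nonneg (sq_nonneg _) hx
    have hval : ∫ x, (x - 1/2)^2 * f x ∂μ
        = 1/4 - ∫ x, x * (1 - x) * f x ∂μ := by
      rw [hg2eq, integral_sub (hfint.const_mul _) hgint, integral_const_mul, hint]
      ring
    rcases lt_or_eq_of_le (integral_nonneg_of_ae hg2nn) with h | h
    · rw [hval] at h; linarith
    exfalso
    have hzero := (integral_eq_zero_iff_of_nonneg_ae hg2nn hg2int).mp h.symm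
    refine hfz ({1/2} : Set ℝ) ?_ ?_
    · rw [hμ, Measure.restrict_apply (measurableSet_singleton _)]
      exact measure_mono_null Set.inter_subset_left (Real.volume_singleton)
    · filter_upwards [hzero] with x hx hxS
      simp only [Set.mem_singleton_iff] at hxS
      have : (x - 1/2)^2 * f x = 0 := hx
      rcases mul_eq_zero.mp this with h' | h'
      · exact absurd (by nlinarith [sq_nonneg (x - 1/2)] : x = 1/2) hxS
      · exact h'

lemma part1 : {r : ℝ | ∃ f : ℝ → ℝ, IsGenerator f ∧
        r = 6 * (∫ x in Set.Icc (0:ℝ) 1, x * (1 - x) * f x) - 1}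
      = Set.Ioo (-1 : ℝ) (1/2) := by
  ext r
  simp only [Set.mem_setOf_eq, Set.mem_Ioo]
  constructor
  · rintro ⟨f, hf, rfl⟩
    obtain ⟨h1, h2⟩ := gen_bounds hf
    constructor <;> linarith
  · rintro ⟨hr1, hr2⟩
    by_cases hc : r ≤ 0
    · -- small case: uniform on [0, t]
      set s := Real.sqrt (9 - 8*(r+1)) with hsdef
      have hs2 : s^2 = 9 - 8*(r+1) := Real.sq_sqrt (by linarith)
      have hs0 : 0 ≤ s := Real.sqrt_nonneg _
      have hs3 : s < 3 := by nlinarith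
      have hs1 : 1 ≤ s := by nlinarith
      refine ⟨fun x => if x ∈ Set.Icc (0:ℝ) ((3 - s)/4) then ((3 - s)/4 - 0)⁻¹ else 0,
        unif_gen le_rfl (by linarith) (by linarith), ?_⟩
      rw [unif_val (by linarith : (0:ℝ) < (3 - s)/4)
        (Set.Icc_subset_Icc le_rfl (by linarith))]
      have hne : (3:ℝ) - s ≠ 0 := by
        intro h; nlinarith
      have hval : ((3 - s)/4 - 0)⁻¹ * ((((3 - s)/4)^2 - 0^2)/2 - (((3 - s)/4)^3 - 0^3)/3)
          = (3 - s)/8 - (3 - s)^2/48 := by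
        rw [sub_zero]
        field_simp [hne]
        ring
      rw [hval]
      linear_combination hs2 / 8
    · -- large case: uniform on [1/2 - t, 1/2 + t]
      push_neg at hc
      set t := Real.sqrt (3/4 - (r+1)/2) with htdef
      have ht2 : t^2 = 3/4 - (r+1)/2 := Real.sq_sqrt (by linarith)
      have ht0 : 0 ≤ t := Real.sqrt_nonneg _
      have ht0' : 0 < t := by
        rcases eq_or_lt_of_le ht0 with h | h
        · exfalso; nlinarith
        · exact h
      have ht1 : t < 1/2 := by nlinarith
      refine ⟨fun x => if x ∈ Set.Icc (1/2 - t) (1/2 + t) then ((1/2 + t) - (1/2 - t))⁻¹ else 0,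
        unif_gen (by linarith) (by linarith) (by linarith), ?_⟩
      rw [unif_val (by linarith : (1:ℝ)/2 - t < 1/2 + t)
        (Set.Icc_subset_Icc (by linarith) (by linarith))]
      have hval : ((1/2 + t) - (1/2 - t))⁻¹ *
            ((((1/2 + t))^2 - ((1/2 - t))^2)/2 - (((1/2 + t))^3 - ((1/2 - t))^3)/3)
          = 1/4 - t^2/3 := by
        rw [show ((1:ℝ)/2 + t) - (1/2 - t) = 2*t by ring]
        field_simp
        ring
      rw [hval]
      linear_combination 2 * ht2

lemma part1_mem (r : ℝ) :
    (∃ f : ℝ → ℝ, IsGenerator f ∧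
        r = 6 * (∫ x in Set.Icc (0:ℝ) 1, x * (1 - x) * f x) - 1)
      ↔ r ∈ Set.Ioo (-1 : ℝ) (1/2) := by
  have := Set.ext_iff.mp part1 r
  simpa using this

lemma part2 : {r : ℝ | ∃ f : ℝ → ℝ, IsGenerator f ∧
        r = 1 - 6 * ∫ x in Set.Icc (0:ℝ) 1, x * (1 - x) * f x}
      = Set.Ioo (-(1/2) : ℝ) 1 := by
  ext r
  simp only [Set.mem_setOf_eq, Set.mem_Ioo]
  constructor
  · rintro ⟨f, hf, rfl⟩
    obtain ⟨hl, hu⟩ := gen_bounds hf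
    constructor <;> linarith
  · rintro ⟨ha, hb⟩
    obtain ⟨f, hf, hre⟩ := (part1_mem (-r)).mpr (Set.mem_Ioo.mpr ⟨by linarith, by linarith⟩)
    exact ⟨f, hf, by linarith⟩

theorem stmt_8 :
    ({r : ℝ | ∃ f : ℝ → ℝ, IsGenerator f ∧
        r = 6 * (∫ x in Set.Icc (0:ℝ) 1, x * (1 - x) * f x) - 1}
      = Set.Ioo (-1 : ℝ) (1/2))
    ∧ ∀ s : Fin 2 → Bool,
      {r : ℝ | ∃ f : ℝ → ℝ, IsGenerator f ∧
          r = (-1 : ℝ) ^ (((if s 0 then 1 else 0) + (if s 1 then 1 else 0) : ℕ)) *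
              (6 * (∫ x in Set.Icc (0:ℝ) 1, x * (1 - x) * f x) - 1)}
        = if s 0 = s 1 then Set.Ioo (-1 : ℝ) (1/2) else Set.Ioo (-(1/2) : ℝ) 1 := by
  refine ⟨part1, fun s => ?_⟩
  cases h0 : s 0 <;> cases h1 : s 1 <;> simp only [h0, h1] <;> norm_num <;>
    first
      | exact part1
      | exact part2
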